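/- Let G be a transitively closed episode and let e and f be episode events of G. Then: (1) if node(e) ≠ node(f), there exist a sequence s and a coverage mapping m of G into s with ts(m(e)) ≠ ts(m(f)); (2) if node(e) ≠ node(f) and node(e) is not a descendant of node(f), there exist a sequence s and a coverage mapping m of G into s with ts(m(e)) < ts(m(f)); (3) if node(e) is not a proper descendant of node(f), there exist a sequence s and a coverage mapping m of G into s with ts(m(e)) ≤ ts(m(f)). -/

import Mathlib

/-- A sequence event: a unique id, a label (from alphabet encoded as `ℕ`),
and an integer time stamp. -/
structure SeqEvent where
  id : ℕ
  lab : ℕ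
  ts : ℤ
deriving DecidableEq

/-- An event sequence: a finite collection of sequence events with distinct ids,
whose time stamps are monotone in the ids. -/
structure EventSeq where
  events : Finset SeqEvent
  id_inj : ∀ e ∈ events, ∀ f ∈ events, e.id = f.id → e = f
  ts_mono : ∀ e ∈ events, ∀ f ∈ events, e.id ≤ f.id → e.ts ≤ f.ts

/-- An episode: a finite set of episode events (identified by ids in `ℕ`) with labels,
a finite set of graph nodes, a map from events to nodes (surjectivity and the DAG
property are recorded in `Episode.WellFormed`), and weak and proper edges. -/
structure Episode where
  events : Finset ℕ
  lab : ℕ → ℕ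
  nodes : Finset ℕ
  node : ℕ → ℕ
  weak : ℕ → ℕ → Prop
  proper : ℕ → ℕ → Prop

namespace Episode

/-- An edge of the episode graph (weak or proper). -/
def edge (G : Episode) (a b : ℕ) : Prop := G.weak a b ∨ G.proper a b

/-- `G.Desc m n` : `n` is a descendant of `m`, i.e. there is a directed path from `m` to `n`. -/
def Desc (G : Episode) (m n : ℕ) : Prop := Relation.TransGen G.edge m n

/-- `G.PDesc m n` : `n` is a proper descendant of `m`, i.e. some directed path
from `m` to `n` contains a proper edge. -/
def PDesc (G : Episode) (m n : ℕ) : Prop :=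
  ∃ a b, Relation.ReflTransGen G.edge m a ∧ G.proper a b ∧ Relation.ReflTransGen G.edge b n

/-- Well-formedness of an episode: events map into the nodes, every node carries an
event, edges run between nodes, the weak and proper edges are disjoint, and the
graph is acyclic (a DAG). -/
structure WellFormed (G : Episode) : Prop where
  node_mem : ∀ e ∈ G.events, G.node e ∈ G.nodes
  node_surj : ∀ n ∈ G.nodes, ∃ e ∈ G.events, G.node e = n
  weak_mem : ∀ a b, G.weak a b → a ∈ G.nodes ∧ b ∈ G.nodes
  proper_mem : ∀ a b, G.proper a b → a ∈ G.nodes ∧ b ∈ G.nodes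
  weak_proper_disjoint : ∀ a b, G.weak a b → G.proper a b → False
  acyclic : ∀ n, ¬ G.Desc n n

/-- The transitive closure of an episode: add an edge from every node to each of its
descendants, proper if the descendant is a proper descendant, weak otherwise. -/
def tcl (G : Episode) : Episode :=
  { G with
    proper := fun a b => G.PDesc a b
    weak := fun a b => G.Desc a b ∧ ¬ G.PDesc a b }

/-- An episode is transitively closed if it coincides with its transitive closure. -/
def TransClosed (G : Episode) : Prop :=
  (∀ a b, G.proper a b ↔ G.PDesc a b) ∧
  (∀ a b, G.weak a b ↔ (G.Desc a b ∧ ¬ G.PDesc a b))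

end Episode

/-- `m` is a coverage mapping of episode `G` into sequence `s`: an injective map from
the episode events into the sequence events preserving labels, mapping events of one
node to a common time stamp, and respecting weak and proper edges. -/
def IsCoverMap (s : EventSeq) (G : Episode) (m : ℕ → SeqEvent) : Prop :=
  (∀ e ∈ G.events, m e ∈ s.events) ∧
  Set.InjOn m ↑G.events ∧
  (∀ e ∈ G.events, (m e).lab = G.lab e) ∧
  (∀ e ∈ G.events, ∀ f ∈ G.events, G.node e = G.node f → (m e).ts = (m f).ts) ∧
  (∀ e ∈ G.events, ∀ f ∈ G.events, G.Desc (G.node f) (G.node e) → (m f).ts ≤ (m e).ts) ∧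
  (∀ e ∈ G.events, ∀ f ∈ G.events, G.PDesc (G.node f) (G.node e) → (m f).ts < (m e).ts)

/-- A sequence `s` covers an episode `G`. -/
def Covers (s : EventSeq) (G : Episode) : Prop := ∃ m, IsCoverMap s G m

/-- `G ⪯ H` : every sequence covering `H` also covers `G`. -/
def Subepisode (G H : Episode) : Prop := ∀ s : EventSeq, Covers s H → Covers s G

/-- `G ∼ H` : `G ⪯ H` and `H ⪯ G`. -/
def EpisodeSimilar (G H : Episode) : Prop := Subepisode G H ∧ Subepisode H G

/-- The window `s[i, j]`: the subsequence of events with time stamps in `[i, j]`. -/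
def EventSeq.window (s : EventSeq) (i j : ℤ) : EventSeq where
  events := s.events.filter (fun e => i ≤ e.ts ∧ e.ts ≤ j)
  id_inj := fun e he f hf h =>
    s.id_inj e (Finset.mem_filter.mp he).1 f (Finset.mem_filter.mp hf).1 h
  ts_mono := fun e he f hf h =>
    s.ts_mono e (Finset.mem_filter.mp he).1 f (Finset.mem_filter.mp hf).1 h

/-- The support `fr(G; s)` with window size `ρ`: the number of integers `t` such that
the window `s[t, t + ρ - 1]` covers `G` (as an extended natural number). -/
noncomputable def support (ρ : ℤ) (s : EventSeq) (G : Episode) : ℕ∞ :=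
  {t : ℤ | Covers (s.window t (t + ρ - 1)) G}.encard

/-- `first(i)` : the smallest time stamp in the range of the instance. -/
noncomputable def instFirst (G : Episode) (m : ℕ → SeqEvent) : ℤ :=
  sInf ((fun e => (m e).ts) '' ↑G.events)

/-- `last(i)` : the largest time stamp in the range of the instance. -/
noncomputable def instLast (G : Episode) (m : ℕ → SeqEvent) : ℤ :=
  sSup ((fun e => (m e).ts) '' ↑G.events)

/-- `m` is an instance of `G` in `s` (with window size `ρ`): a coverage mapping of `G`
into `s` such that no used sequence event can be replaced by an unused one with the same
label, the same time stamp and a smaller id, and whose span is less than `ρ`. -/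
def IsInstance (ρ : ℤ) (s : EventSeq) (G : Episode) (m : ℕ → SeqEvent) : Prop :=
  IsCoverMap s G m ∧
  (∀ e ∈ G.events, ∀ f ∈ s.events, (∀ e' ∈ G.events, m e' ≠ f) →
      f.lab = (m e).lab → f.ts = (m e).ts → ¬ f.id < (m e).id) ∧
  instLast G m - instFirst G m ≤ ρ - 1


/-! ### Auxiliary machinery -/

open Relation

namespace EpAux

/-- The edge relation of `G` augmented with one extra edge `p → q`. -/
def aug (G : Episode) (p q x y : ℕ) : Prop := G.edge x y ∨ (x = p ∧ y = q)

/-- "Strict reachability" through a distinguished relation `S` in the augmented graph. -/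
def PP (G : Episode) (p q : ℕ) (S : ℕ → ℕ → Prop) (m n : ℕ) : Prop :=
  ∃ x y, ReflTransGen (aug G p q) m x ∧ S x y ∧ ReflTransGen (aug G p q) y n

/-- Potential: number of nodes that `PP`-reach `n`. -/
noncomputable def pot (G : Episode) (p q : ℕ) (S : ℕ → ℕ → Prop) (n : ℕ) : ℕ :=
  {m | m ∈ G.nodes ∧ PP G p q S m n}.ncard

lemma edge_mem {G : Episode} (hG : G.WellFormed) {a b : ℕ} (h : G.edge a b) :
    a ∈ G.nodes ∧ b ∈ G.nodes :=
  h.elim (hG.weak_mem a b) (hG.proper_mem a b)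

lemma rtg_aug_of_rtg {G : Episode} {p q u v : ℕ} (h : ReflTransGen G.edge u v) :
    ReflTransGen (aug G p q) u v := ReflTransGen.mono (p := aug G p q) (fun _ _ h => Or.inl h) u v h

lemma rtg_aug_of_desc {G : Episode} {p q u v : ℕ} (h : G.Desc u v) :
    ReflTransGen (aug G p q) u v := rtg_aug_of_rtg h.to_reflTransGen

lemma decomp {G : Episode} {p q u v : ℕ} (h : ReflTransGen (aug G p q) u v) :
    ReflTransGen G.edge u v ∨ (ReflTransGen G.edge u p ∧ ReflTransGen G.edge q v) := by
  induction h with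
  | refl => exact Or.inl ReflTransGen.refl
  | tail _ hstep ih =>
    rcases hstep with hE | ⟨rfl, rfl⟩
    · rcases ih with h1 | ⟨h1, h2⟩
      · exact Or.inl (h1.tail hE)
      · exact Or.inr ⟨h1, h2.tail hE⟩
    · rcases ih with h1 | ⟨h1, _⟩
      · exact Or.inr ⟨h1, ReflTransGen.refl⟩
      · exact Or.inr ⟨h1, ReflTransGen.refl⟩

lemma desc_of_parts {G : Episode} {a x y b : ℕ} (h1 : ReflTransGen G.edge a x)
    (hp : G.proper x y) (h2 : ReflTransGen G.edge y b) : G.Desc a b := by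
  have t1 : Relation.TransGen G.edge a y := Relation.TransGen.tail' h1 (Or.inr hp)
  exact Relation.TransGen.trans_left t1 h2

lemma pdesc_desc {G : Episode} {a b : ℕ} (h : G.PDesc a b) : G.Desc a b := by
  obtain ⟨x, y, h1, hp, h2⟩ := h
  exact desc_of_parts h1 hp h2

lemma pdesc_src_mem {G : Episode} (hG : G.WellFormed) {a b : ℕ} (h : G.PDesc a b) :
    a ∈ G.nodes := by
  obtain ⟨x, y, h1, hp, _⟩ := h
  rcases h1.cases_head with rfl | ⟨c, hac, _⟩
  · exact (hG.proper_mem _ _ hp).1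
  · exact (edge_mem hG hac).1

lemma PP_src_mem {G : Episode} (hG : G.WellFormed) {p q : ℕ} (hp : p ∈ G.nodes)
    {S : ℕ → ℕ → Prop} (hS : ∀ x y, S x y → x ∈ G.nodes)
    {a b : ℕ} (h : PP G p q S a b) : a ∈ G.nodes := by
  obtain ⟨x, y, h1, hs, _⟩ := h
  rcases h1.cases_head with rfl | ⟨c, hac, _⟩
  · exact hS _ _ hs
  · rcases hac with hE | ⟨rfl, _⟩
    · exact (edge_mem hG hE).1
    · exact hp

lemma PP_of_pdesc {G : Episode} {p q : ℕ} {S : ℕ → ℕ → Prop}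
    (hS : ∀ x y, G.proper x y → S x y) {a b : ℕ} (h : G.PDesc a b) : PP G p q S a b := by
  obtain ⟨x, y, h1, hp, h2⟩ := h
  exact ⟨x, y, rtg_aug_of_rtg h1, hS _ _ hp, rtg_aug_of_rtg h2⟩

lemma PP_mono {G : Episode} {p q : ℕ} {S : ℕ → ℕ → Prop} {m a b : ℕ}
    (h : PP G p q S m a) (hab : ReflTransGen (aug G p q) a b) : PP G p q S m b := by
  obtain ⟨x, y, h1, hs, h2⟩ := h
  exact ⟨x, y, h1, hs, h2.trans hab⟩

lemma pot_fin {G : Episode} {p q : ℕ} {S : ℕ → ℕ → Prop} {n : ℕ} :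
    {m | m ∈ G.nodes ∧ PP G p q S m n}.Finite :=
  Set.Finite.subset G.nodes.finite_toSet (fun m hm => hm.1)

lemma pot_le {G : Episode} {p q : ℕ} {S : ℕ → ℕ → Prop} {a b : ℕ}
    (hab : ReflTransGen (aug G p q) a b) : pot G p q S a ≤ pot G p q S b :=
  Set.ncard_le_ncard (fun m hm => ⟨hm.1, PP_mono hm.2 hab⟩) pot_fin

lemma pot_lt {G : Episode} {p q : ℕ} {S : ℕ → ℕ → Prop} {a b : ℕ}
    (hab : ReflTransGen (aug G p q) a b) (hP : PP G p q S a b)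
    (hirr : ¬ PP G p q S a a) (ha : a ∈ G.nodes) : pot G p q S a < pot G p q S b := by
  have hsub : {m | m ∈ G.nodes ∧ PP G p q S m a} ⊆ {m | m ∈ G.nodes ∧ PP G p q S m b} :=
    fun m hm => ⟨hm.1, PP_mono hm.2 hab⟩
  apply Set.ncard_lt_ncard _ pot_fin
  exact (Set.ssubset_iff_of_subset hsub).mpr ⟨a, ⟨ha, hP⟩, fun hmem => hirr hmem.2⟩

/-- Irreflexivity of `PP` with `S = proper`, assuming no proper path `q → p`. -/
lemma irr3 {G : Episode} (hG : G.WellFormed) {p q : ℕ} (hnp : ¬ G.PDesc q p) :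
    ∀ a, ¬ PP G p q G.proper a a := by
  rintro a ⟨x, y, h1, hp, h2⟩
  rcases decomp h1 with h1 | ⟨h1a, h1b⟩ <;> rcases decomp h2 with h2 | ⟨h2a, h2b⟩
  · exact hG.acyclic a (desc_of_parts h1 hp h2)
  · exact hnp ⟨x, y, h2b.trans h1, hp, h2a⟩
  · exact hnp ⟨x, y, h1b, hp, h2.trans h1a⟩
  · exact hnp ⟨x, y, h1b, hp, h2a⟩

/-- Irreflexivity of `PP` with `S = proper ⊔ extra edge`, assuming no path `q → p`. -/
lemma irr2 {G : Episode} (hG : G.WellFormed) {p q : ℕ}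
    (hq : ¬ ReflTransGen G.edge q p) :
    ∀ a, ¬ PP G p q (fun x y => G.proper x y ∨ (x = p ∧ y = q)) a a := by
  have hnp : ¬ G.PDesc q p := fun h => hq (pdesc_desc h).to_reflTransGen
  rintro a ⟨x, y, h1, hs, h2⟩
  rcases hs with hp | ⟨rfl, rfl⟩
  · exact irr3 hG hnp a ⟨x, y, h1, hp, h2⟩
  · rcases decomp h1 with h1 | ⟨h1a, h1b⟩
    · rcases decomp h2 with h2 | ⟨h2a, _⟩
      · exact hq (h2.trans h1)
      · exact hq h2a
    · exact hq h1b

/-- Given a monotone potential, build a covering sequence realising it as timestamps. -/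
lemma cover_of_pot (G : Episode) (t : ℕ → ℕ)
    (hmono : ∀ a b, G.Desc a b → t a ≤ t b)
    (hstrict : ∀ a b, G.PDesc a b → t a < t b) :
    ∃ s m, IsCoverMap s G m ∧ ∀ k, (m k).ts = (t (G.node k) : ℤ) := by
  classical
  set B : ℕ := G.events.sup id + 1 with hBdef
  have hBpos : ∀ k ∈ G.events, k < B := fun k hk =>
    Nat.lt_succ_of_le (Finset.le_sup (f := id) hk)
  have key : ∀ a x b y : ℕ, x < B → y < B → a * B + x ≤ b * B + y → a ≤ b := by
    intro a x b y hx hy h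
    by_contra hab
    push_neg at hab
    have h1 : (b + 1) * B ≤ a * B := Nat.mul_le_mul_right B hab
    have h2 : b * B + B ≤ a * B := by rw [Nat.succ_mul] at h1; exact h1
    linarith
  have keyeq : ∀ a x b y : ℕ, x < B → y < B → a * B + x = b * B + y → a = b ∧ x = y := by
    intro a x b y hx hy h
    have hab : a = b :=
      le_antisymm (key a x b y hx hy h.le) (key b y a x hy hx h.ge)
    subst hab
    exact ⟨rfl, by omega⟩
  set m : ℕ → SeqEvent :=
    fun k => ⟨t (G.node k) * B + k, G.lab k, (t (G.node k) : ℤ)⟩ with hmdef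
  have hmid : ∀ k, (m k).id = t (G.node k) * B + k := fun _ => rfl
  have hmts : ∀ k, (m k).ts = (t (G.node k) : ℤ) := fun _ => rfl
  refine ⟨⟨G.events.image m, ?_, ?_⟩, m, ⟨?_, ?_, ?_, ?_, ?_, ?_⟩, fun k => rfl⟩
  · intro x hx y hy hid
    obtain ⟨k, hk, rfl⟩ := Finset.mem_image.mp hx
    obtain ⟨k', hk', rfl⟩ := Finset.mem_image.mp hy
    rw [hmid, hmid] at hid
    obtain ⟨h1, h2⟩ := keyeq _ _ _ _ (hBpos k hk) (hBpos k' hk') hid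
    rw [h2]
  · intro x hx y hy hid
    obtain ⟨k, hk, rfl⟩ := Finset.mem_image.mp hx
    obtain ⟨k', hk', rfl⟩ := Finset.mem_image.mp hy
    rw [hmid, hmid] at hid
    have := key _ _ _ _ (hBpos k hk) (hBpos k' hk') hid
    rw [hmts, hmts]
    exact_mod_cast this
  · exact fun k hk => Finset.mem_image_of_mem m hk
  · intro k hk k' hk' hmeq
    have hid : (m k).id = (m k').id := by rw [hmeq]
    rw [hmid, hmid] at hid
    exact (keyeq _ _ _ _ (hBpos k hk) (hBpos k' hk') hid).2
  · exact fun k _ => rfl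
  · intro k _ k' _ hn
    rw [hmts, hmts, hn]
  · intro k _ k' _ hd
    rw [hmts, hmts]
    exact_mod_cast hmono _ _ hd
  · intro k _ k' _ hd
    rw [hmts, hmts]
    exact_mod_cast hstrict _ _ hd

end EpAux

/-- Lemma 8 of the paper: for a transitively closed episode `G` and
events `e`, `f` of `G`: (1) if `node e ≠ node f` there is a sequence covering `G` via a
mapping `m` with `ts (m e) ≠ ts (m f)`; (2) if, moreover, `node e` is not a descendant
of `node f`, there is one with `ts (m e) < ts (m f)`; (3) if `node e` is not a proper
descendant of `node f`, there is one with `ts (m e) ≤ ts (m f)`. -/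
theorem exists_cover_separating (G : Episode)
    (hG : G.WellFormed) (hGt : G.TransClosed)
    (e f : ℕ) (he : e ∈ G.events) (hf : f ∈ G.events) :
    (G.node e ≠ G.node f →
      ∃ (s : EventSeq) (m : ℕ → SeqEvent), IsCoverMap s G m ∧ (m e).ts ≠ (m f).ts) ∧
    (G.node e ≠ G.node f ∧ ¬ G.Desc (G.node f) (G.node e) →
      ∃ (s : EventSeq) (m : ℕ → SeqEvent), IsCoverMap s G m ∧ (m e).ts < (m f).ts) ∧
    (¬ G.PDesc (G.node f) (G.node e) →
      ∃ (s : EventSeq) (m : ℕ → SeqEvent), IsCoverMap s G m ∧ (m e).ts ≤ (m f).ts) := by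
  classical
  -- A general "part 2" statement, usable with the roles of `e` and `f` swapped.
  have part2 : ∀ e f : ℕ, e ∈ G.events → f ∈ G.events → G.node e ≠ G.node f →
      ¬ G.Desc (G.node f) (G.node e) →
      ∃ (s : EventSeq) (m : ℕ → SeqEvent), IsCoverMap s G m ∧ (m e).ts < (m f).ts := by
    intro e f he hf hne hnd
    set p := G.node e with hp
    set q := G.node f with hq
    set S : ℕ → ℕ → Prop := fun x y => G.proper x y ∨ (x = p ∧ y = q) with hS
    have hqp : ¬ Relation.ReflTransGen G.edge q p := by
      intro h
      rcases (Relation.reflTransGen_iff_eq_or_transGen).mp h with h | h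
      · exact hne h
      · exact hnd h
    have hirr := EpAux.irr2 hG hqp
    have hmono : ∀ a b, G.Desc a b → EpAux.pot G p q S a ≤ EpAux.pot G p q S b :=
      fun a b h => EpAux.pot_le (EpAux.rtg_aug_of_desc h)
    have hstrict : ∀ a b, G.PDesc a b → EpAux.pot G p q S a < EpAux.pot G p q S b := by
      intro a b h
      exact EpAux.pot_lt (EpAux.rtg_aug_of_desc (EpAux.pdesc_desc h))
        (EpAux.PP_of_pdesc (fun x y hxy => Or.inl hxy) h) (hirr a)
        (EpAux.pdesc_src_mem hG h)
    obtain ⟨s, m, hcov, hts⟩ := EpAux.cover_of_pot G (EpAux.pot G p q S) hmono hstrict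
    refine ⟨s, m, hcov, ?_⟩
    rw [hts e, hts f]
    have hstep : Relation.ReflTransGen (EpAux.aug G p q) p q :=
      Relation.ReflTransGen.single (Or.inr ⟨rfl, rfl⟩)
    have hPP : EpAux.PP G p q S p q :=
      ⟨p, q, Relation.ReflTransGen.refl, Or.inr ⟨rfl, rfl⟩, Relation.ReflTransGen.refl⟩
    have := EpAux.pot_lt hstep hPP (hirr p) (hG.node_mem e he)
    exact_mod_cast this
  refine ⟨?_, fun h => part2 e f he hf h.1 h.2, ?_⟩
  · intro hne
    by_cases hd : G.Desc (G.node f) (G.node e)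
    · have hnd : ¬ G.Desc (G.node e) (G.node f) := fun h => hG.acyclic _ (hd.trans h)
      obtain ⟨s, m, hcov, hlt⟩ := part2 f e hf he hne.symm hnd
      exact ⟨s, m, hcov, (ne_of_lt hlt).symm⟩
    · obtain ⟨s, m, hcov, hlt⟩ := part2 e f he hf hne hd
      exact ⟨s, m, hcov, ne_of_lt hlt⟩
  · intro hnp
    set p := G.node e with hp
    set q := G.node f with hq
    set S : ℕ → ℕ → Prop := G.proper with hS
    have hirr := EpAux.irr3 hG (p := p) (q := q) hnp
    have hmono : ∀ a b, G.Desc a b → EpAux.pot G p q S a ≤ EpAux.pot G p q S b :=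
      fun a b h => EpAux.pot_le (EpAux.rtg_aug_of_desc h)
    have hstrict : ∀ a b, G.PDesc a b → EpAux.pot G p q S a < EpAux.pot G p q S b := by
      intro a b h
      exact EpAux.pot_lt (EpAux.rtg_aug_of_desc (EpAux.pdesc_desc h))
        (EpAux.PP_of_pdesc (fun _ _ hxy => hxy) h) (hirr a)
        (EpAux.pdesc_src_mem hG h)
    obtain ⟨s, m, hcov, hts⟩ := EpAux.cover_of_pot G (EpAux.pot G p q S) hmono hstrict
    refine ⟨s, m, hcov, ?_⟩
    rw [hts e, hts f]
    have hstep : Relation.ReflTransGen (EpAux.aug G p q) p q :=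
      Relation.ReflTransGen.single (Or.inr ⟨rfl, rfl⟩)
    exact_mod_cast EpAux.pot_le (S := S) hstep
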